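/- Let $\Lambda_1,\dots,\Lambda_d\subset\mathbb{P}^n$ be $(k-1)$-planes satisfying $\mathrm{SP}(n-k)$, and let $2\le r\le\min\{d-2,n-k+1\}$ be such that for a general point $p\in\Lambda_d$ one has $p\notin\Lambda_i$ for $i=1,\dots,r$ and the projections $\Gamma_i:=\pi_p(\Lambda_i)\subset\mathbb{P}^{n-1}$, $i=1,\dots,r$, satisfy $\mathrm{SP}(n-k-1)$. Then either (A) $\Lambda_d\subseteq\mathrm{Span}(\Lambda_1,\dots,\Lambda_r)$, or (B) $\Lambda_1,\dots,\Lambda_r$ satisfy $\mathrm{SP}(n-k)$. -/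

import Mathlib

def SP {V : Type*} [AddCommGroup V] [Module ℂ V]
    (c : ℕ) (s : Finset ℕ) (Λ : ℕ → Submodule ℂ V) : Prop :=
  ∀ j ∈ s, ∀ L : Submodule ℂ V, Module.finrank ℂ L = c + 1 →
    (∀ i ∈ s, i ≠ j → L ⊓ Λ i ≠ ⊥) → L ⊓ Λ j ≠ ⊥

open Module Submodule

lemma aux_le_of_avoid {V : Type*} [AddCommGroup V] [Module ℂ V]
    {U W : Submodule ℂ V} (T : Finset (Submodule ℂ V))
    (hT : ∀ X ∈ T, ¬ U ≤ X)
    (h : ∀ u ∈ U, u ≠ 0 → (∀ X ∈ T, u ∉ X) → u ∈ W) : U ≤ W := by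
  by_contra hUW
  classical
  set s : Finset (Submodule ℂ U) :=
    insert (W.comap U.subtype) (T.image fun X => X.comap U.subtype) with hs
  have htop : ⊤ ∉ s := by
    simp only [hs, Finset.mem_insert, Finset.mem_image]
    push_neg
    refine ⟨fun hc => hUW (Submodule.comap_subtype_eq_top.mp hc.symm), ?_⟩
    intro X hX hc
    exact hT X hX (Submodule.comap_subtype_eq_top.mp hc)
  have hne := Subspace.biUnion_ne_univ_of_top_notMem htop
  rw [Set.ne_univ_iff_exists_notMem] at hne
  obtain ⟨u, hu⟩ := hne
  simp only [Set.mem_iUnion, SetLike.mem_coe, not_exists] at hu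
  have huW : u ∉ W.comap U.subtype := hu _ (Finset.mem_insert_self _ _)
  have hu0 : (u : V) ≠ 0 := by
    intro h0
    apply huW
    simp only [Submodule.mem_comap, Submodule.coe_subtype, h0]
    exact W.zero_mem
  have huT : ∀ X ∈ T, (u : V) ∉ X := by
    intro X hX hmem
    exact hu _ (Finset.mem_insert_of_mem (Finset.mem_image_of_mem _ hX)) hmem
  exact huW (h u u.2 hu0 huT)

lemma finrank_map_mkQ_of_not_mem {V : Type*} [AddCommGroup V] [Module ℂ V]
    [FiniteDimensional ℂ V] {p : V} {L : Submodule ℂ V} (h : p ∉ L) :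
    finrank ℂ (L.map (Submodule.span ℂ {p}).mkQ) = finrank ℂ L := by
  set f := (Submodule.span ℂ {p}).mkQ.domRestrict L with hf
  have hker : LinearMap.ker f = ⊥ := by
    rw [hf, LinearMap.ker_domRestrict]
    ext x
    simp only [Submodule.mem_comap, Submodule.ker_mkQ, Submodule.coe_subtype,
      Submodule.mem_bot, Submodule.mem_span_singleton]
    constructor
    · rintro ⟨c, hc⟩
      rcases eq_or_ne c 0 with rfl | hc0
      · ext; simp [← hc]
      · exfalso
        apply h
        have hcL : c • p ∈ L := by rw [hc]; exact x.2
        have := Submodule.smul_mem L c⁻¹ hcL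
        rwa [smul_smul, inv_mul_cancel₀ hc0, one_smul] at this
    · rintro rfl; exact ⟨0, by simp⟩
  have := LinearMap.finrank_range_add_finrank_ker f
  rw [hker, finrank_bot, add_zero, hf, LinearMap.range_domRestrict] at this
  exact this

lemma finrank_map_mkQ_of_mem {V : Type*} [AddCommGroup V] [Module ℂ V]
    [FiniteDimensional ℂ V] {p : V} {L : Submodule ℂ V} (hp : p ∈ L) (hp0 : p ≠ 0) :
    finrank ℂ (L.map (Submodule.span ℂ {p}).mkQ) + 1 = finrank ℂ L := by
  set f := (Submodule.span ℂ {p}).mkQ.domRestrict L with hf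
  have hsp : Submodule.span ℂ {p} ≤ L := by
    rw [Submodule.span_singleton_le_iff_mem]; exact hp
  have hker : finrank ℂ (LinearMap.ker f) = 1 := by
    rw [hf, LinearMap.ker_domRestrict, Submodule.ker_mkQ]
    rw [(Submodule.comapSubtypeEquivOfLe hsp).finrank_eq]
    exact finrank_span_singleton hp0
  have := LinearMap.finrank_range_add_finrank_ker f
  rw [hker, hf, LinearMap.range_domRestrict] at this
  exact this

/-- Let `Λ₁,…,Λ_d ⊂ ℙⁿ` be `(k-1)`-planes satisfying `SP(n-k)`, and let
`2 ≤ r ≤ min{d-2, n-k+1}` be such that for a *general* point `p ∈ Λ_d` (i.e. every point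
of `Λ_d` avoiding a fixed finite collection `T` of subspaces none of which contains `Λ_d`)
one has `p ∉ Λᵢ` for `i = 1,…,r` and the projections `Γᵢ := π_p(Λᵢ) ⊂ ℙ^{n-1}` satisfy
`SP(n-k-1)` (projection from `p` being modeled by the quotient map `V → V ⧸ ℂp`).
Then either (A) `Λ_d ⊆ Span(Λ₁,…,Λ_r)`, or (B) `Λ₁,…,Λ_r` satisfy `SP(n-k)`. -/
theorem sp_of_general_projection {V : Type*} [AddCommGroup V] [Module ℂ V]
    [FiniteDimensional ℂ V]
    (n k d r : ℕ) (hk : 1 ≤ k) (hkn : k ≤ n) (hr : 2 ≤ r) (hrd : r + 2 ≤ d)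
    (hrn : r ≤ n - k + 1)
    (hV : Module.finrank ℂ V = n + 1)
    (Λ : ℕ → Submodule ℂ V)
    (hdim : ∀ i ∈ Finset.Icc 1 d, Module.finrank ℂ (Λ i) = k)
    (hSP : SP (n - k) (Finset.Icc 1 d) Λ)
    (T : Finset (Submodule ℂ V)) (hT : ∀ W ∈ T, ¬ Λ d ≤ W)
    (hgen : ∀ v : V, v ∈ Λ d → v ≠ 0 → (∀ W ∈ T, v ∉ W) →
      (∀ i ∈ Finset.Icc 1 r, v ∉ Λ i) ∧
      SP (n - k - 1) (Finset.Icc 1 r)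
        (fun i => (Λ i).map (Submodule.span ℂ {v}).mkQ)) :
    Λ d ≤ (⨆ i ∈ Finset.Icc 1 r, Λ i) ∨ SP (n - k) (Finset.Icc 1 r) Λ := by
  classical
  by_cases hB : SP (n - k) (Finset.Icc 1 r) Λ
  · exact Or.inr hB
  left
  unfold SP at hB
  push_neg at hB
  obtain ⟨j, hj, L, hLdim, hmeets, hLj⟩ := hB
  have hjr := Finset.mem_Icc.mp hj
  have hnk : 1 ≤ n - k := by omega
  have hjd : j ∈ Finset.Icc 1 d := Finset.mem_Icc.mpr ⟨hjr.1, by omega⟩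
  have hΛj : finrank ℂ (Λ j) = k := hdim j hjd
  have hΛd : finrank ℂ (Λ d) = k := hdim d (Finset.mem_Icc.mpr ⟨by omega, le_rfl⟩)
  -- choose witnesses of the intersections L ⊓ Λ i for i ≠ j
  have hvex : ∀ i : ℕ, ∃ x : V,
      i ∈ (Finset.Icc 1 r).erase j → (x ∈ L ∧ x ∈ Λ i ∧ x ≠ 0) := by
    intro i
    by_cases hi : i ∈ (Finset.Icc 1 r).erase j
    · have := hmeets i (Finset.mem_of_mem_erase hi) (Finset.ne_of_mem_erase hi)
      rw [Submodule.ne_bot_iff] at this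
      obtain ⟨x, hx, hx0⟩ := this
      rw [Submodule.mem_inf] at hx
      exact ⟨x, fun _ => ⟨hx.1, hx.2, hx0⟩⟩
    · exact ⟨0, fun h => absurd h hi⟩
  choose v hv using hvex
  set S : Submodule ℂ V := ⨆ i ∈ (Finset.Icc 1 r).erase j, Submodule.span ℂ {v i} with hS
  have hSL : S ≤ L := by
    refine iSup_le fun i => iSup_le fun hi => ?_
    rw [Submodule.span_singleton_le_iff_mem]; exact (hv i hi).1
  have hvS : ∀ i ∈ (Finset.Icc 1 r).erase j, v i ∈ S := by
    intro i hi
    exact Submodule.mem_iSup_of_mem i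
      (Submodule.mem_iSup_of_mem hi (Submodule.mem_span_singleton_self _))
  have hSW : S ≤ ⨆ i ∈ Finset.Icc 1 r, Λ i := by
    refine iSup_le fun i => iSup_le fun hi => ?_
    rw [Submodule.span_singleton_le_iff_mem]
    exact Submodule.mem_iSup_of_mem i
      (Submodule.mem_iSup_of_mem (Finset.mem_of_mem_erase hi) ((hv i hi).2.1))
  have hjW : Λ j ≤ ⨆ i ∈ Finset.Icc 1 r, Λ i := by
    intro x hx
    exact Submodule.mem_iSup_of_mem j (Submodule.mem_iSup_of_mem hj hx)
  have hΛdne : Λ d ≠ ⊥ := by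
    intro h; rw [h, finrank_bot] at hΛd; omega
  have hsup : L ⊔ Λ j = ⊤ := by
    apply Submodule.eq_top_of_finrank_eq
    have h2 := Submodule.finrank_sup_add_finrank_inf_eq L (Λ j)
    rw [hLj, finrank_bot, add_zero, hLdim, hΛj] at h2
    rw [h2, hV]; omega
  apply aux_le_of_avoid T hT
  intro p hpd hp0 hpT
  obtain ⟨hpΛ, hSPΓ⟩ := hgen p hpd hp0 hpT
  have hptop : p ∈ L ⊔ Λ j := by rw [hsup]; exact Submodule.mem_top
  obtain ⟨a, haL, b, hbj, hab⟩ := Submodule.mem_sup.mp hptop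
  by_cases haS : a ∈ S
  · rw [← hab]; exact add_mem (hSW haS) (hjW hbj)
  exfalso
  set π := (Submodule.span ℂ {p}).mkQ with hπ
  have key : ∀ L₀ : Submodule ℂ V, S ≤ L₀ → L₀ ≤ L →
      finrank ℂ (L₀.map π) = n - k →
      ∃ x ∈ L₀, ∃ y ∈ Λ j, ∃ c : ℂ, x - y = c • p ∧ π x ≠ 0 := by
    intro L₀ hSL₀ hL₀L hM
    have hMdim : finrank ℂ (L₀.map π) = n - k - 1 + 1 := by omega
    have hMne := hSPΓ j hj (L₀.map π) hMdim ?_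
    · rw [Submodule.ne_bot_iff] at hMne
      obtain ⟨w, hw, hw0⟩ := hMne
      rw [Submodule.mem_inf] at hw
      obtain ⟨x, hxL₀, hxw⟩ := Submodule.mem_map.mp hw.1
      obtain ⟨y, hyj, hyw⟩ := Submodule.mem_map.mp hw.2
      have hxy : x - y ∈ Submodule.span ℂ {p} := by
        rw [← Submodule.Quotient.eq]
        show π x = π y
        rw [hxw, hyw]
      obtain ⟨c, hc⟩ := Submodule.mem_span_singleton.mp hxy
      exact ⟨x, hxL₀, y, hyj, c, hc.symm, by rw [hxw]; exact hw0⟩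
    · intro i hi hij
      have hiE : i ∈ (Finset.Icc 1 r).erase j := Finset.mem_erase.mpr ⟨hij, hi⟩
      obtain ⟨hviL, hviΛ, hvi0⟩ := hv i hiE
      rw [Submodule.ne_bot_iff]
      refine ⟨π (v i), Submodule.mem_inf.mpr
        ⟨Submodule.mem_map_of_mem (hSL₀ (hvS i hiE)), Submodule.mem_map_of_mem hviΛ⟩, ?_⟩
      intro h0
      rw [hπ, Submodule.mkQ_apply, Submodule.Quotient.mk_eq_zero,
        Submodule.mem_span_singleton] at h0
      obtain ⟨c, hc⟩ := h0
      rcases eq_or_ne c 0 with rfl | hc0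
      · rw [zero_smul] at hc; exact hvi0 hc.symm
      · apply hpΛ i hi
        have := Submodule.smul_mem (Λ i) c⁻¹ (hc ▸ hviΛ : c • p ∈ Λ i)
        rwa [smul_smul, inv_mul_cancel₀ hc0, one_smul] at this
  by_cases hpL : p ∈ L
  · -- projection of L itself gives a contradiction
    have hM : finrank ℂ (L.map π) = n - k := by
      rw [hπ]
      have := finrank_map_mkQ_of_mem hpL hp0
      rw [hLdim] at this; omega
    obtain ⟨x, hxL, y, hyj, c, hc, hx0⟩ := key L hSL le_rfl hM
    have hyL : y ∈ L := by
      have hyx : y = x - c • p := by rw [← hc, sub_sub_cancel]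
      rw [hyx]
      exact Submodule.sub_mem _ hxL (Submodule.smul_mem _ _ hpL)
    have hy0 : y = 0 := by
      have : y ∈ L ⊓ Λ j := Submodule.mem_inf.mpr ⟨hyL, hyj⟩
      rwa [hLj, Submodule.mem_bot] at this
    apply hx0
    have hx : x ∈ Submodule.span ℂ {p} := by
      rw [Submodule.mem_span_singleton]
      exact ⟨c, by rw [← hc, hy0, sub_zero]⟩
    rw [hπ, Submodule.mkQ_apply, Submodule.Quotient.mk_eq_zero]
    exact hx
  · -- p ∉ L : construct a hyperplane L₀ of L containing S avoiding a
    set S' : Submodule ℂ L := S.comap L.subtype with hS'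
    have haU : (⟨a, haL⟩ : L) ∉ S' := by
      intro h; exact haS h
    have haq : S'.mkQ ⟨a, haL⟩ ≠ 0 := by
      simp only [Submodule.mkQ_apply, ne_eq, Submodule.Quotient.mk_eq_zero]
      exact haU
    have hφex : ∃ φ : Module.Dual ℂ (L ⧸ S'), φ (S'.mkQ ⟨a, haL⟩) ≠ 0 := by
      by_contra hφ
      push_neg at hφ
      exact haq ((Module.forall_dual_apply_eq_zero_iff ℂ _).mp hφ)
    obtain ⟨φ, hφ⟩ := hφex
    set f : L →ₗ[ℂ] ℂ := φ ∘ₗ S'.mkQ with hfdef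
    set L₀ : Submodule ℂ V := (LinearMap.ker f).map L.subtype with hL₀def
    have hL₀L : L₀ ≤ L := Submodule.map_subtype_le L _
    have hSL₀ : S ≤ L₀ := by
      intro s hs
      refine Submodule.mem_map.mpr ⟨⟨s, hSL hs⟩, ?_, rfl⟩
      rw [LinearMap.mem_ker, hfdef, LinearMap.comp_apply, Submodule.mkQ_apply]
      have : (⟨s, hSL hs⟩ : L) ∈ S' := hs
      rw [(Submodule.Quotient.mk_eq_zero _).mpr this, map_zero]
    have haL₀ : a ∉ L₀ := by
      intro hmem
      obtain ⟨y, hy, hyv⟩ := Submodule.mem_map.mp hmem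
      have hye : y = ⟨a, haL⟩ := Subtype.ext hyv
      rw [hye, LinearMap.mem_ker, hfdef, LinearMap.comp_apply, Submodule.mkQ_apply] at hy
      exact hφ hy
    have hfa : f ⟨a, haL⟩ ≠ 0 := by
      rw [hfdef, LinearMap.comp_apply, Submodule.mkQ_apply]; exact hφ
    have hr₀ : finrank ℂ L₀ = n - k := by
      have h1 := LinearMap.finrank_range_add_finrank_ker f
      have h2 : finrank ℂ (LinearMap.range f) = 1 := by
        have hle : finrank ℂ (LinearMap.range f) ≤ 1 := by
          simpa using Submodule.finrank_le (LinearMap.range f)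
        have hne : LinearMap.range f ≠ ⊥ := by
          rw [Submodule.ne_bot_iff]
          exact ⟨f ⟨a, haL⟩, LinearMap.mem_range_self _ _, hfa⟩
        have h0 : finrank ℂ (LinearMap.range f) ≠ 0 := by
          intro h0
          exact hne (Submodule.finrank_eq_zero.mp h0)
        omega
      have h3 : finrank ℂ L₀ = finrank ℂ (LinearMap.ker f) := by
        rw [hL₀def]
        exact Submodule.finrank_map_subtype_eq L _
      rw [h2, hLdim] at h1
      omega
    have hpL₀ : p ∉ L₀ := fun h => hpL (hL₀L h)
    have hM : finrank ℂ (L₀.map π) = n - k := by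
      rw [hπ, finrank_map_mkQ_of_not_mem hpL₀]; exact hr₀
    obtain ⟨x, hxL₀, y, hyj, c, hc, hx0⟩ := key L₀ hSL₀ hL₀L hM
    rcases eq_or_ne c 0 with rfl | hc0
    · rw [zero_smul] at hc
      have hxy : x = y := sub_eq_zero.mp hc
      have hx0' : x = 0 := by
        have : x ∈ L ⊓ Λ j := Submodule.mem_inf.mpr ⟨hL₀L hxL₀, hxy ▸ hyj⟩
        rwa [hLj, Submodule.mem_bot] at this
      exact hx0 (by rw [hx0', map_zero])
    · have hpeq : p = c⁻¹ • x - c⁻¹ • y := by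
        rw [← smul_sub, hc, smul_smul, inv_mul_cancel₀ hc0, one_smul]
      have hdiffeq : a - c⁻¹ • x = -(c⁻¹ • y) - b := by
        have hab' : a + b = c⁻¹ • x - c⁻¹ • y := by rw [hab, hpeq]
        calc a - c⁻¹ • x = (a + b) - b - c⁻¹ • x := by abel
          _ = (c⁻¹ • x - c⁻¹ • y) - b - c⁻¹ • x := by rw [hab']
          _ = -(c⁻¹ • y) - b := by abel
      have hdiff : a - c⁻¹ • x ∈ L ⊓ Λ j := by
        refine Submodule.mem_inf.mpr ⟨Submodule.sub_mem _ haL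
          (Submodule.smul_mem _ _ (hL₀L hxL₀)), ?_⟩
        rw [hdiffeq]
        exact Submodule.sub_mem _ (Submodule.neg_mem _ (Submodule.smul_mem _ _ hyj)) hbj
      rw [hLj, Submodule.mem_bot] at hdiff
      have hax : a = c⁻¹ • x := sub_eq_zero.mp hdiff
      exact haL₀ (hax ▸ Submodule.smul_mem _ _ hxL₀)
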